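/- Let (X, Σ, ν) be a finite measure space, {f_n}, f measurable nonnegative functions with f_n → f ν-a.e., let {μ_n}, μ be nonnegative measures absolutely continuous w.r.t. ν with μ_n(A) → μ(A) for every A ∈ Σ, and assume μ_n({f_n = 0}) → μ({f = 0}). Then for any uniformly bounded sequence of measurable functions h_n : X → ℝ with ‖h_n‖_∞ ≤ M, one has ∫_X (χ_{{f_n=0}} − χ_{{f=0}}) h_n dμ_n → 0 as n → ∞. -/

import Mathlib

open MeasureTheory Filter Topology

/-- Under the standing hypotheses plus `μ_n {f_n = 0} → μ {f = 0}`,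
for any uniformly bounded measurable `h_n`,
`∫ (χ_{{f_n=0}} − χ_{{f=0}}) h_n dμ_n → 0`. -/
theorem tendsto_integral_indicator_diff_zero
    {X : Type*} [MeasurableSpace X] (ν : Measure X) [IsFiniteMeasure ν]
    (f : ℕ → X → ℝ) (g : X → ℝ)
    (hfm : ∀ n, Measurable (f n)) (hgm : Measurable g)
    (hfpos : ∀ n x, 0 ≤ f n x) (hgpos : ∀ x, 0 ≤ g x)
    (hae : ∀ᵐ x ∂ν, Tendsto (fun n => f n x) atTop (nhds (g x)))
    (μseq : ℕ → Measure X) (μ : Measure X)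
    (hfin : ∀ n, IsFiniteMeasure (μseq n)) [IsFiniteMeasure μ]
    (hac : ∀ n, μseq n ≪ ν) (hacμ : μ ≪ ν)
    (hconv : ∀ A : Set X, MeasurableSet A →
      Tendsto (fun n => μseq n A) atTop (nhds (μ A)))
    (hzero : Tendsto (fun n => μseq n {x | f n x = 0}) atTop (nhds (μ {x | g x = 0})))
    (h : ℕ → X → ℝ) (hhm : ∀ n, Measurable (h n))
    (M : ℝ) (hM : ∀ n x, |h n x| ≤ M) :
    Tendsto (fun n => ∫ x,
        (Set.indicator {x | f n x = 0} (fun _ => (1:ℝ)) x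
          - Set.indicator {x | g x = 0} (fun _ => (1:ℝ)) x) * h n x ∂(μseq n))
      atTop (nhds 0) := by
  classical
  have hfinn := hfin
  set A : ℕ → Set X := fun n => {x | f n x = 0} with hAdef
  set B : Set X := {x | g x = 0} with hBdef
  have hAm : ∀ n, MeasurableSet (A n) := fun n => hfm n (measurableSet_singleton 0)
  have hBm : MeasurableSet B := hgm (measurableSet_singleton 0)
  -- the "bad" sets
  set D : ℕ → Set X := fun k => ⋃ n, ⋃ (_ : k ≤ n), (A n \ B) with hDdef
  have hDm : ∀ k, MeasurableSet (D k) := fun k =>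
    MeasurableSet.iUnion fun n => MeasurableSet.iUnion fun _ => (hAm n).diff hBm
  have hDanti : Antitone D := by
    intro i j hij
    simp only [hDdef]
    exact Set.iUnion₂_subset fun n hn =>
      Set.subset_iUnion₂ (s := fun m (_ : i ≤ m) => A m \ B) n (hij.trans hn)
  have hsub : ∀ k n, k ≤ n → A n \ B ⊆ D k := by
    intro k n hkn
    simp only [hDdef]
    exact Set.subset_iUnion₂ (s := fun m (_ : k ≤ m) => A m \ B) n hkn
  have hnull : ν (⋂ k, D k) = 0 := by
    refine measure_mono_null ?_ (ae_iff.mp hae)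
    intro x hx
    simp only [Set.mem_iInter, hDdef, Set.mem_iUnion, Set.mem_diff] at hx
    intro hT
    obtain ⟨n0, _, _, hgx⟩ := hx 0
    have hg : 0 < g x := lt_of_le_of_ne (hgpos x) (Ne.symm hgx)
    have hev : ∀ᶠ n in atTop, g x / 2 < f n x :=
      hT.eventually (eventually_gt_nhds (half_lt_self hg))
    obtain ⟨N, hN⟩ := eventually_atTop.mp hev
    obtain ⟨n, hn, hfn, _⟩ := hx N
    have := hN n hn
    rw [hfn] at this
    exact absurd this (not_lt.mpr (le_of_lt (half_pos hg)))
  have hμinter : μ (⋂ k, D k) = 0 := hacμ hnull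
  have hDtend : Tendsto (fun k => μ (D k)) atTop (𝓝 0) := by
    rw [← hμinter]
    exact tendsto_measure_iInter_atTop (fun k => (hDm k).nullMeasurableSet) hDanti ⟨0, measure_ne_top μ _⟩
  -- Step 1: μseq n (A n \ B) → 0
  have h1 : Tendsto (fun n => μseq n (A n \ B)) atTop (𝓝 0) := by
    rw [ENNReal.tendsto_atTop_zero]
    intro ε hε
    obtain ⟨k, hk⟩ := (hDtend.eventually_lt_const hε).exists
    obtain ⟨N, hN⟩ := eventually_atTop.mp ((hconv (D k) (hDm k)).eventually_lt_const hk)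
    refine ⟨max N k, fun n hn => ?_⟩
    calc μseq n (A n \ B) ≤ μseq n (D k) :=
          measure_mono (hsub k n (le_trans (le_max_right N k) hn))
      _ ≤ ε := le_of_lt (hN n (le_trans (le_max_left N k) hn))
  -- setwise convergences
  have hBconv : Tendsto (fun n => μseq n B) atTop (𝓝 (μ B)) := hconv B hBm
  have hAconv : Tendsto (fun n => μseq n (A n)) atTop (𝓝 (μ B)) := hzero
  have hUconv : Tendsto (fun n => μseq n (A n ∪ B)) atTop (𝓝 (μ B)) := by
    have heq : ∀ n, μseq n (A n ∪ B) = μseq n (A n \ B) + μseq n B := by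
      intro n
      rw [← measure_union Set.disjoint_sdiff_left hBm, Set.diff_union_self]
    simp_rw [heq]
    simpa using h1.add hBconv
  -- Step 2: μseq n (B \ A n) → 0
  have h2 : Tendsto (fun n => μseq n (B \ A n)) atTop (𝓝 0) := by
    have heq : ∀ n, μseq n (B \ A n) = μseq n (A n ∪ B) - μseq n (A n) := by
      intro n
      have hsum : μseq n (B \ A n) + μseq n (A n) = μseq n (A n ∪ B) := by
        rw [← measure_union Set.disjoint_sdiff_left (hAm n), Set.diff_union_self,
          Set.union_comm]
      exact ENNReal.eq_sub_of_add_eq (measure_ne_top _ _) hsum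
    simp_rw [heq]
    simpa using ENNReal.Tendsto.sub hUconv hAconv (Or.inr (measure_ne_top μ B))
  -- symmetric difference tends to 0
  have hΔ : Tendsto (fun n => μseq n ((A n \ B) ∪ (B \ A n))) atTop (𝓝 0) := by
    refine tendsto_of_tendsto_of_tendsto_of_le_of_le tendsto_const_nhds
      (by simpa using h1.add h2) (fun n => zero_le) (fun n => measure_union_le _ _)
  set M' : ℝ := max M 0 with hM'def
  have hM' : ∀ n x, |h n x| ≤ M' := fun n x => (hM n x).trans (le_max_left M 0)
  have hMreal : Tendsto (fun n => M' * (μseq n ((A n \ B) ∪ (B \ A n))).toReal)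
      atTop (𝓝 0) := by
    have ht : Tendsto (fun n => (μseq n ((A n \ B) ∪ (B \ A n))).toReal) atTop (𝓝 0) := by
      have := (ENNReal.tendsto_toReal (by simp : (0:ENNReal) ≠ ⊤)).comp hΔ
      exact this
    simpa using ht.const_mul M'
  refine squeeze_zero_norm (fun n => ?_) hMreal
  have := hfinn n
  have hgint : Integrable (((A n \ B) ∪ (B \ A n)).indicator (fun _ => M')) (μseq n) :=
    (integrable_const M').indicator (((hAm n).diff hBm).union (hBm.diff (hAm n)))
  have hbound : ∀ x, ‖(Set.indicator (A n) (fun _ => (1:ℝ)) x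
      - Set.indicator B (fun _ => (1:ℝ)) x) * h n x‖
      ≤ ((A n \ B) ∪ (B \ A n)).indicator (fun _ => M') x := by
    intro x
    by_cases hx : x ∈ (A n \ B) ∪ (B \ A n)
    · rw [Set.indicator_of_mem hx]
      have hd : |Set.indicator (A n) (fun _ => (1:ℝ)) x
          - Set.indicator B (fun _ => (1:ℝ)) x| ≤ 1 := by
        by_cases h1 : x ∈ A n <;> by_cases h2 : x ∈ B <;>
          simp [Set.indicator_of_mem, Set.indicator_of_notMem, h1, h2]
      rw [Real.norm_eq_abs, abs_mul]
      calc |Set.indicator (A n) (fun _ => (1:ℝ)) x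
            - Set.indicator B (fun _ => (1:ℝ)) x| * |h n x|
          ≤ 1 * M' := mul_le_mul hd (hM' n x) (abs_nonneg _) zero_le_one
        _ = M' := one_mul _
    · rw [Set.indicator_of_notMem hx]
      have hx' : x ∉ A n \ B ∧ x ∉ B \ A n := by
        constructor <;> intro hc <;> exact hx (by simp [hc])
      have hdz : Set.indicator (A n) (fun _ => (1:ℝ)) x
          = Set.indicator B (fun _ => (1:ℝ)) x := by
        by_cases h1 : x ∈ A n <;> by_cases h2 : x ∈ B <;>
          simp [Set.indicator_of_mem, Set.indicator_of_notMem, h1, h2] at hx' ⊢ <;>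
          tauto
      rw [hdz]
      simp
  calc ‖∫ x, (Set.indicator {x | f n x = 0} (fun _ => (1:ℝ)) x
        - Set.indicator {x | g x = 0} (fun _ => (1:ℝ)) x) * h n x ∂(μseq n)‖
      ≤ ∫ x, ((A n \ B) ∪ (B \ A n)).indicator (fun _ => M') x ∂(μseq n) :=
        norm_integral_le_of_norm_le hgint (Filter.Eventually.of_forall hbound)
    _ = (μseq n ((A n \ B) ∪ (B \ A n))).toReal • M' := by
        rw [integral_indicator_const M' (((hAm n).diff hBm).union (hBm.diff (hAm n)))]
        rfl
    _ = M' * (μseq n ((A n \ B) ∪ (B \ A n))).toReal := by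
        rw [smul_eq_mul, mul_comm]
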